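/- arXiv:2604.27991 — 3 statements merged into one kernel-verified Lean document; each statement's English description precedes it below -/
import Mathlib

section
/- Let (y_n)_{n≥0} be a Markov chain with transition matrix P and initial distribution δ_i for a state i ∈ I. Then the expected escape time from I, computed in the extended nonnegative reals, satisfies 𝔼[T] = ∑_{k=0}^∞ (Q^k 𝟙)_i (where both sides may equal +∞). -/
open MeasureTheory Matrix Finset ENNReal

/-- The path in `Fin N` starting at `a` and then following `u`, extended by `a` beyond `k`. -/
def escSeq {N k : ℕ} (a : Fin N) (u : Fin k → Fin N) : ℕ → Fin N
  | 0 => a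
  | (n+1) => if h : n < k then u ⟨n, h⟩ else a

/-- Sum over all length-`k` paths inside `I` starting at `a` of the product of transition
probabilities. -/
noncomputable def escWeight {N : ℕ} (P : Matrix (Fin N) (Fin N) ℝ) (I : Finset (Fin N))
    (k : ℕ) (a : Fin N) : ℝ :=
  ∑ u : Fin k → {x // x ∈ I}, ∏ m ∈ Finset.range k,
    P (escSeq a (fun j => ↑(u j)) m) (escSeq a (fun j => ↑(u j)) (m+1))

lemma escSeq_cons_succ {N k : ℕ} (a b : Fin N) (u : Fin k → Fin N) (m : ℕ) (hm : m ≤ k) :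
    escSeq a (Fin.cons b u : Fin (k+1) → Fin N) (m+1) = escSeq b u m := by
  cases m with
  | zero => simp [escSeq]
  | succ j =>
    have hj : j + 1 < k + 1 := by omega
    simp only [escSeq, hj, dif_pos]
    have : (⟨j+1, hj⟩ : Fin (k+1)) = Fin.succ ⟨j, by omega⟩ := rfl
    rw [this, Fin.cons_succ]
    have hjk : j < k := by omega
    simp [hjk]

lemma escWeight_succ {N : ℕ} (P : Matrix (Fin N) (Fin N) ℝ) (I : Finset (Fin N))
    (k : ℕ) (a : Fin N) :
    escWeight P I (k+1) a = ∑ b : {x // x ∈ I}, P a ↑b * escWeight P I k ↑b := by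
  unfold escWeight
  rw [← Equiv.sum_comp (Fin.consEquiv (fun _ : Fin (k+1) => {x // x ∈ I})), Fintype.sum_prod_type]
  refine Finset.sum_congr rfl fun b _ => ?_
  rw [Finset.mul_sum]
  refine Finset.sum_congr rfl fun u _ => ?_
  have hcoe : (fun j => ((Fin.consEquiv (fun _ : Fin (k+1) => {x // x ∈ I})) (b, u) j : Fin N))
      = Fin.cons (↑b) (fun j => ↑(u j)) := by
    funext j
    show (Subtype.val ∘ Fin.cons b u) j = _
    rw [Fin.comp_cons]
    rfl
  rw [hcoe, Finset.prod_range_succ']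
  have h0 : escSeq a (Fin.cons (↑b) (fun j => ↑(u j)) : Fin (k+1) → Fin N) 0 = a := rfl
  have h1 : escSeq a (Fin.cons (↑b) (fun j => ↑(u j)) : Fin (k+1) → Fin N) 1 = ↑b := by
    simpa [escSeq] using escSeq_cons_succ a (↑b) (fun j => ↑(u j)) 0 (Nat.zero_le k)
  rw [h0, h1, mul_comm]
  congr 1
  refine Finset.prod_congr rfl fun m hm => ?_
  rw [Finset.mem_range] at hm
  rw [escSeq_cons_succ a (↑b) _ m (by omega), escSeq_cons_succ a (↑b) _ (m+1) (by omega)]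

lemma escWeight_eq_mulVec {N : ℕ} (P : Matrix (Fin N) (Fin N) ℝ) (I : Finset (Fin N))
    (Q : Matrix {x // x ∈ I} {x // x ∈ I} ℝ)
    (hQ : ∀ a b : {x // x ∈ I}, Q a b = P a b) :
    ∀ (k : ℕ) (a : {x // x ∈ I}),
      (Q ^ k *ᵥ (fun _ => 1)) a = escWeight P I k ↑a := by
  intro k
  induction k with
  | zero =>
    intro a
    simp [Matrix.one_mulVec, escWeight]
  | succ k ih =>
    intro a
    rw [pow_succ', ← Matrix.mulVec_mulVec, escWeight_succ]
    show ∑ b, Q a b * (Q ^ k *ᵥ fun _ => 1) b = _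
    refine Finset.sum_congr rfl fun b _ => ?_
    rw [hQ, ih b]

lemma enat_coe_eq_tsum (n : ℕ∞) :
    (n : ℝ≥0∞) = ∑' k : ℕ, (if (k : ℕ∞) < n then (1 : ℝ≥0∞) else 0) := by
  cases n with
  | top =>
    have h : ∀ k : ℕ, (if (k : ℕ∞) < ⊤ then (1 : ℝ≥0∞) else 0) = 1 := fun k =>
      if_pos (lt_top_iff_ne_top.2 (by simp))
    rw [tsum_congr h]
    simp [ENNReal.tsum_const_eq_top_of_ne_zero]
  | coe m =>
    rw [tsum_eq_sum (s := Finset.range m) ?_]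
    · rw [Finset.sum_congr rfl (fun k hk => if_pos (by
        rw [Finset.mem_range] at hk; exact_mod_cast hk))]
      simp
    · intro k hk
      rw [Finset.mem_range, not_lt] at hk
      exact if_neg (by exact_mod_cast not_lt.2 hk)

/-- Let `(y n)` be a Markov chain on `{1,…,N}` with row-stochastic
transition matrix `P` and initial distribution `δ_i` for a state `i ∈ I`.  Then the
expected escape time from `I`, computed in `[0,∞]`, satisfies
`𝔼[T] = ∑_{k=0}^∞ (Q^k 𝟙)_i` (where both sides may equal `+∞`). -/
theorem markov_expected_escape_time_eq_tsum
    (N : ℕ) (hN : 0 < N)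
    (P : Matrix (Fin N) (Fin N) ℝ)
    (hPnonneg : ∀ a b, 0 ≤ P a b)
    (hProw : ∀ a, ∑ b, P a b = 1)
    (I : Finset (Fin N))
    (Q : Matrix {x // x ∈ I} {x // x ∈ I} ℝ)
    (hQ : ∀ a b : {x // x ∈ I}, Q a b = P a b)
    (Ω : Type*) [MeasurableSpace Ω] (μ : Measure Ω) [IsProbabilityMeasure μ]
    (y : ℕ → Ω → Fin N) (hy : ∀ n, Measurable (y n))
    (i : Fin N) (hi : i ∈ I)
    -- finite-dimensional laws of the chain, started in the Dirac distribution `δ_i`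
    (hlaw : ∀ (n : ℕ) (w : ℕ → Fin N),
      μ {ω | ∀ k ≤ n, y k ω = w k} =
        ENNReal.ofReal ((if w 0 = i then (1 : ℝ) else 0) *
          ∏ k ∈ Finset.range n, P (w k) (w (k + 1))))
    -- the escape time from `I`
    (T : Ω → ℕ∞)
    (hT : ∀ ω, T ω = sInf {n : ℕ∞ | ∃ m : ℕ, n = (m : ℕ∞) ∧ 1 ≤ m ∧ y m ω ∉ I}) :
    ∫⁻ ω, ((T ω : ℕ∞) : ℝ≥0∞) ∂μ =
      ∑' k : ℕ, ENNReal.ofReal ((Q ^ k *ᵥ (fun _ => 1)) ⟨i, hi⟩) := by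
  -- characterization of the event `T > k`
  have hTgt : ∀ (k : ℕ) (ω : Ω),
      ((k : ℕ∞) < T ω ↔ ∀ m, 1 ≤ m → m ≤ k → y m ω ∈ I) := by
    intro k ω
    rw [hT ω]
    constructor
    · intro h m h1 hm
      by_contra hmem
      have hS : (m : ℕ∞) ∈ {n : ℕ∞ | ∃ m' : ℕ, n = (m' : ℕ∞) ∧ 1 ≤ m' ∧ y m' ω ∉ I} :=
        ⟨m, rfl, h1, hmem⟩
      have hle : sInf {n : ℕ∞ | ∃ m' : ℕ, n = (m' : ℕ∞) ∧ 1 ≤ m' ∧ y m' ω ∉ I} ≤ m :=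
        sInf_le hS
      have : (k : ℕ∞) < (m : ℕ∞) := lt_of_lt_of_le h hle
      have : k < m := by exact_mod_cast this
      omega
    · intro h
      have hk1 : ((k + 1 : ℕ) : ℕ∞) ≤
          sInf {n : ℕ∞ | ∃ m' : ℕ, n = (m' : ℕ∞) ∧ 1 ≤ m' ∧ y m' ω ∉ I} := by
        refine le_sInf ?_
        rintro n ⟨m, rfl, h1, hm⟩
        have : ¬ m ≤ k := fun hle => hm (h m h1 hle)
        exact_mod_cast (by omega : k + 1 ≤ m)
      exact lt_of_lt_of_le (by exact_mod_cast Nat.lt_succ_self k) hk1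
  -- the stay-in-`I` event is measurable
  have hImeas : MeasurableSet (↑I : Set (Fin N)) := (↑I : Set (Fin N)).toFinite.measurableSet
  have hEmeas : ∀ k : ℕ, MeasurableSet {ω | ∀ m, 1 ≤ m → m ≤ k → y m ω ∈ I} := by
    intro k
    have : {ω | ∀ m, 1 ≤ m → m ≤ k → y m ω ∈ I}
        = ⋂ m ∈ Finset.Icc 1 k, y m ⁻¹' (↑I : Set (Fin N)) := by
      ext ω
      simp only [Set.mem_setOf_eq, Set.mem_iInter, Finset.mem_Icc, Set.mem_preimage,
        Finset.mem_coe, and_imp]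
    rw [this]
    exact MeasurableSet.biInter (Finset.Icc 1 k).countable_toSet
      (fun m _ => (hy m) hImeas)
  -- `y 0 = i` almost surely
  have hA1 : μ {ω | y 0 ω = i} = 1 := by
    have h := hlaw 0 (fun _ => i)
    have hset : {ω | ∀ k ≤ 0, y k ω = i} = {ω | y 0 ω = i} := by
      ext ω; simp [Nat.le_zero]
    rw [hset] at h
    simpa using h
  have hAmeas : MeasurableSet {ω | y 0 ω = i} := (hy 0) (measurableSet_singleton i)
  have hAc : μ {ω | y 0 ω = i}ᶜ = 0 := by
    rw [measure_compl hAmeas (measure_ne_top μ _), hA1, measure_univ]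
    simp
  -- the measure of the stay-in-`I` event equals the path-sum
  have hmeasE : ∀ k : ℕ,
      μ {ω | ∀ m, 1 ≤ m → m ≤ k → y m ω ∈ I} = ENNReal.ofReal (escWeight P I k i) := by
    intro k
    set E := {ω | ∀ m, 1 ≤ m → m ≤ k → y m ω ∈ I} with hE
    set A := {ω | y 0 ω = i} with hAdef
    have hEA : μ E = μ (E ∩ A) := by
      refine le_antisymm ?_ (measure_mono Set.inter_subset_left)
      calc μ E ≤ μ (E ∩ A) + μ (E \ A) := measure_le_inter_add_diff μ E A
        _ ≤ μ (E ∩ A) + μ Aᶜ := add_le_add (le_refl _) (measure_mono (fun ω hω => hω.2))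
        _ = μ (E ∩ A) := by rw [hAc, add_zero]
    have hunion : E ∩ A = ⋃ u ∈ (Finset.univ : Finset (Fin k → {x // x ∈ I})),
        {ω | ∀ m ≤ k, y m ω = escSeq i (fun j => ↑(u j)) m} := by
      ext ω
      simp only [hE, hAdef, Set.mem_inter_iff, Set.mem_setOf_eq, Set.mem_iUnion,
        Finset.mem_univ, exists_true_left]
      constructor
      · rintro ⟨hEω, hA0⟩
        refine ⟨fun j => ⟨y (j.1 + 1) ω, hEω (j.1 + 1) (by omega) (by omega)⟩, ?_⟩
        intro m hm
        cases m with
        | zero => exact hA0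
        | succ n =>
          have hn : n < k := by omega
          simp [escSeq, hn]
      · rintro ⟨u, hu⟩
        constructor
        · intro m h1 hk2
          rw [hu m hk2]
          cases m with
          | zero => omega
          | succ n =>
            have hn : n < k := by omega
            simp only [escSeq, hn, dif_pos]
            exact (u ⟨n, hn⟩).2
        · have h0 := hu 0 (Nat.zero_le k)
          exact h0
    have hdisj : ((Finset.univ : Finset (Fin k → {x // x ∈ I})) : Set (Fin k → {x // x ∈ I})).PairwiseDisjoint
        (fun u => {ω | ∀ m ≤ k, y m ω = escSeq i (fun j => ↑(u j)) m}) := by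
      intro u _ v _ huv
      refine Set.disjoint_left.2 fun ω hωu hωv => huv ?_
      funext j
      have h1 := hωu (j.1 + 1) (by omega)
      have h2 := hωv (j.1 + 1) (by omega)
      apply Subtype.ext
      have hj : j.1 < k := j.2
      have e1 : escSeq i (fun j' => ↑(u j')) (j.1 + 1) = ↑(u j) := by
        simp [escSeq, hj]
      have e2 : escSeq i (fun j' => ↑(v j')) (j.1 + 1) = ↑(v j) := by
        simp [escSeq, hj]
      rw [← e1, ← h1, h2, e2]
    have hmeasAu : ∀ u ∈ (Finset.univ : Finset (Fin k → {x // x ∈ I})),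
        MeasurableSet {ω | ∀ m ≤ k, y m ω = escSeq i (fun j => ↑(u j)) m} := by
      intro u _
      have : {ω | ∀ m ≤ k, y m ω = escSeq i (fun j => ↑(u j)) m}
          = ⋂ m ∈ Finset.range (k+1), y m ⁻¹' {escSeq i (fun j => ↑(u j)) m} := by
        ext ω
        simp only [Set.mem_setOf_eq, Set.mem_iInter, Finset.mem_range, Set.mem_preimage,
          Set.mem_singleton_iff]
        constructor
        · intro h m hm; exact h m (by omega)
        · intro h m hm; exact h m (by omega)
      rw [this]
      exact MeasurableSet.biInter (Finset.range (k+1)).countable_toSet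
        (fun m _ => (hy m) (measurableSet_singleton _))
    rw [hEA, hunion, measure_biUnion_finset hdisj hmeasAu]
    have hterm : ∀ u : Fin k → {x // x ∈ I},
        μ {ω | ∀ m ≤ k, y m ω = escSeq i (fun j => ↑(u j)) m}
          = ENNReal.ofReal (∏ m ∈ Finset.range k,
              P (escSeq i (fun j => ↑(u j)) m) (escSeq i (fun j => ↑(u j)) (m+1))) := by
      intro u
      have h := hlaw k (escSeq i (fun j => ↑(u j)))
      have h0 : escSeq i (fun j => ↑(u j)) 0 = i := rfl
      rw [h0, if_pos rfl, one_mul] at h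
      exact h
    rw [Finset.sum_congr rfl (fun u _ => hterm u),
      ← ENNReal.ofReal_sum_of_nonneg (fun u _ => Finset.prod_nonneg fun m _ => hPnonneg _ _)]
    rfl
  -- put everything together
  have hsetT : ∀ k : ℕ, {ω | (k : ℕ∞) < T ω} = {ω | ∀ m, 1 ≤ m → m ≤ k → y m ω ∈ I} :=
    fun k => Set.ext fun ω => hTgt k ω
  have hTmeas : ∀ k : ℕ, MeasurableSet {ω | (k : ℕ∞) < T ω} := by
    intro k; rw [hsetT k]; exact hEmeas k
  calc ∫⁻ ω, ((T ω : ℕ∞) : ℝ≥0∞) ∂μ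
      = ∫⁻ ω, ∑' k : ℕ, ({ω' | (k : ℕ∞) < T ω'}.indicator (1 : Ω → ℝ≥0∞)) ω ∂μ := by
        refine lintegral_congr fun ω => ?_
        rw [enat_coe_eq_tsum]
        refine tsum_congr fun k => ?_
        rw [Set.indicator_apply]
        rfl
    _ = ∑' k : ℕ, ∫⁻ ω, ({ω' | (k : ℕ∞) < T ω'}.indicator (1 : Ω → ℝ≥0∞)) ω ∂μ :=
        lintegral_tsum fun k => (measurable_one.indicator (hTmeas k)).aemeasurable
    _ = ∑' k : ℕ, μ {ω | (k : ℕ∞) < T ω} := by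
        refine tsum_congr fun k => ?_
        exact lintegral_indicator_one (hTmeas k)
    _ = ∑' k : ℕ, ENNReal.ofReal ((Q ^ k *ᵥ (fun _ => 1)) ⟨i, hi⟩) := by
        refine tsum_congr fun k => ?_
        rw [hsetT k, hmeasE k, escWeight_eq_mulVec P I Q hQ k ⟨i, hi⟩]
end

section
/- Let (y_n)_{n≥0} be a Markov chain with transition matrix P and initial distribution δ_i for a state i ∈ I, and assume that the spectral radius of the principal submatrix Q is strictly smaller than 1. Then the chain leaves I almost surely, i.e. ℙ(T < ∞) = 1, the expected escape time is finite, and it is given by 𝔼[T] = ((Id − Q)^{-1} 𝟙)_i. -/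
open MeasureTheory Matrix Finset ENNReal

open Filter Topology

section MatrixGeom

attribute [local instance] Matrix.linftyOpNormedRing Matrix.linftyOpNormedAlgebra
  Matrix.linftyOpNormedSpace

variable {m : Type*} [Fintype m] [DecidableEq m] [Nonempty m]

omit [Nonempty m] in
lemma entry_nnnorm_le {α : Type*} [NormedRing α] (M : Matrix m m α) (a b : m) :
    ‖M a b‖₊ ≤ ‖M‖₊ := by
  rw [Matrix.linfty_opNNNorm_def]
  exact le_trans
    (Finset.single_le_sum (f := fun j => ‖M a j‖₊) (fun _ _ => zero_le) (Finset.mem_univ b))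
    (Finset.le_sup (f := fun i => ∑ j, ‖M i j‖₊) (Finset.mem_univ a))

theorem matrix_hasSum_geom (Q : Matrix m m ℝ)
    (hspec : ∀ z : ℂ, z ∈ spectrum ℂ (Q.map (algebraMap ℝ ℂ)) → ‖z‖ < 1) :
    ∀ a b : m, HasSum (fun n : ℕ => (Q ^ n) a b) ((1 - Q)⁻¹ a b) := by
  haveI : CompleteSpace (Matrix m m ℂ) := FiniteDimensional.complete ℂ _
  haveI : CompleteSpace (Matrix m m ℝ) := FiniteDimensional.complete ℝ _
  set Qc := Q.map (algebraMap ℝ ℂ) with hQc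
  have hρ : spectralRadius ℂ Qc < 1 := by
    have h := spectrum.spectralRadius_lt_of_forall_lt Qc (r := 1)
      (fun z hz => by exact_mod_cast hspec z hz)
    simpa using h
  have gel := spectrum.pow_nnnorm_pow_one_div_tendsto_nhds_spectralRadius Qc
  obtain ⟨r, hρr, hr1⟩ := ENNReal.lt_iff_exists_nnreal_btwn.mp hρ
  have hr1' : (r : ℝ) < 1 := by exact_mod_cast hr1
  have hev : ∀ᶠ n : ℕ in atTop, (‖Qc ^ n‖₊ : ℝ≥0∞) ^ (1 / (n : ℝ)) < r :=
    gel.eventually_lt_const hρr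
  have hev2 : ∀ᶠ n : ℕ in atTop, ‖Qc ^ n‖₊ ≤ r ^ n := by
    filter_upwards [hev, eventually_ge_atTop 1] with n h hn
    have hn0 : (n : ℝ) ≠ 0 := by positivity
    have h2 := ENNReal.rpow_lt_rpow h (by positivity : (0:ℝ) < n)
    rw [← ENNReal.rpow_mul, one_div, inv_mul_cancel₀ hn0,
      ENNReal.rpow_one, ENNReal.rpow_natCast, ← ENNReal.coe_pow, ENNReal.coe_lt_coe] at h2
    exact h2.le
  have hpow : ∀ n : ℕ, Qc ^ n = (Q ^ n).map (algebraMap ℝ ℂ) := by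
    intro n
    rw [hQc, ← RingHom.mapMatrix_apply, ← RingHom.mapMatrix_apply, map_pow]
  have hmap : ∀ M : Matrix m m ℝ, ‖M.map (algebraMap ℝ ℂ)‖₊ = ‖M‖₊ := by
    intro M
    rw [Matrix.linfty_opNNNorm_def, Matrix.linfty_opNNNorm_def]
    congr 1
    ext a
    simp [Matrix.map_apply, Complex.nnnorm_real]
  have hevR : ∀ᶠ n : ℕ in atTop, ‖Q ^ n‖ ≤ (r : ℝ) ^ n := by
    filter_upwards [hev2] with n h
    have : ‖Q ^ n‖₊ ≤ r ^ n := by rwa [← hmap (Q ^ n), ← hpow n]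
    exact_mod_cast this
  have hsum : Summable (fun n : ℕ => Q ^ n) :=
    Summable.of_norm_bounded_eventually_nat (summable_geometric_of_lt_one r.2 hr1') hevR
  have hS := hsum.hasSum
  set S := ∑' n : ℕ, Q ^ n with hSdef
  have hQn0 : Tendsto (fun n : ℕ => Q ^ n) atTop (𝓝 0) :=
    squeeze_zero_norm' hevR (tendsto_pow_atTop_nhds_zero_of_lt_one r.2 hr1')
  have key : (1 - Q) * S = 1 := by
    have h1 : Tendsto (fun k : ℕ => (1 - Q) * ∑ n ∈ Finset.range k, Q ^ n) atTop
        (𝓝 ((1 - Q) * S)) := (hS.tendsto_sum_nat).const_mul _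
    have h2 : ∀ k : ℕ, (1 - Q) * ∑ n ∈ Finset.range k, Q ^ n = 1 - Q ^ k := by
      intro k
      have h3 := mul_geom_sum Q k
      calc (1 - Q) * ∑ n ∈ Finset.range k, Q ^ n
          = -((Q - 1) * ∑ n ∈ Finset.range k, Q ^ n) := by rw [← neg_sub Q 1, neg_mul]
        _ = 1 - Q ^ k := by rw [h3, neg_sub]
    simp_rw [h2] at h1
    have h3 : Tendsto (fun k : ℕ => 1 - Q ^ k) atTop (𝓝 ((1 : Matrix m m ℝ) - 0)) :=
      tendsto_const_nhds.sub hQn0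
    rw [sub_zero] at h3
    exact tendsto_nhds_unique h1 h3
  have hinv : (1 - Q)⁻¹ = S := Matrix.inv_eq_right_inv key
  intro a b
  have cont : Continuous (fun M : Matrix m m ℝ => M a b) := by
    refine (LipschitzWith.of_dist_le_mul (K := 1) fun M N => ?_).continuous
    rw [dist_eq_norm, dist_eq_norm, NNReal.coe_one, one_mul,
      show M a b - N a b = (M - N) a b from rfl]
    exact_mod_cast entry_nnnorm_le (M - N) a b
  have := hS.map (AddMonoidHom.mk' (fun M : Matrix m m ℝ => M a b) (fun _ _ => rfl)) cont
  rw [hinv]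
  exact this

end MatrixGeom

section Paths

variable {N : ℕ} {I : Finset (Fin N)}

/-- The path starting at `a` and continuing through `v`. -/
def ch (a : {x // x ∈ I}) {n : ℕ} (v : Fin n → {x // x ∈ I}) : ℕ → Fin N :=
  fun k => if h : k - 1 < n ∧ k ≠ 0 then ↑(v ⟨k - 1, h.1⟩) else ↑a

lemma ch_zero (a : {x // x ∈ I}) {n : ℕ} (v : Fin n → {x // x ∈ I}) : ch a v 0 = ↑a := by
  simp [ch]

lemma ch_succ (a : {x // x ∈ I}) {n : ℕ} (v : Fin n → {x // x ∈ I}) (j : ℕ) (hj : j < n) :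
    ch a v (j + 1) = ↑(v ⟨j, hj⟩) := by
  simp [ch, hj]

lemma ch_mem (a : {x // x ∈ I}) {n : ℕ} (v : Fin n → {x // x ∈ I}) (k : ℕ) :
    ch a v k ∈ I := by
  unfold ch; split
  · exact (v _).2
  · exact a.2

lemma ch_cons (a x : {x // x ∈ I}) {n : ℕ} (w : Fin n → {x // x ∈ I}) (k : ℕ) (hk : k ≤ n) :
    ch a (Fin.cons x w) (k + 1) = ch x w k := by
  cases k with
  | zero =>
    rw [ch_succ a _ 0 (Nat.succ_pos n), ch_zero]
    congr 1
  | succ j =>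
    have hj : j < n := by omega
    rw [ch_succ a _ (j + 1) (Nat.succ_lt_succ hj), ch_succ x w j hj]
    congr 1

lemma pathsum (P : Matrix (Fin N) (Fin N) ℝ)
    (Q : Matrix {x // x ∈ I} {x // x ∈ I} ℝ) (hQ : ∀ a b, Q a b = P ↑a ↑b) :
    ∀ (n : ℕ) (a : {x // x ∈ I}),
      ∑ v : Fin n → {x // x ∈ I}, ∏ k ∈ Finset.range n, P (ch a v k) (ch a v (k + 1))
        = ∑ b, (Q ^ n) a b := by
  intro n
  induction n with
  | zero =>
    intro a
    simp [Matrix.one_apply]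
  | succ n ih =>
    intro a
    have he : ∀ (p : {x // x ∈ I} × (Fin n → {x // x ∈ I})),
        (Fin.consEquiv (fun _ => ({x // x ∈ I}))) p = Fin.cons p.1 p.2 := fun _ => rfl
    rw [← (Fin.consEquiv (fun _ => ({x // x ∈ I}))).sum_comp
      (fun v => ∏ k ∈ Finset.range (n+1), P (ch a v k) (ch a v (k + 1)))]
    simp only [he]
    rw [Fintype.sum_prod_type]
    have hterm : ∀ (x : {x // x ∈ I}) (w : Fin n → {x // x ∈ I}),
        (∏ k ∈ Finset.range (n+1),
            P (ch a (Fin.cons x w) k) (ch a (Fin.cons x w) (k + 1)))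
          = P ↑a ↑x * ∏ k ∈ Finset.range n, P (ch x w k) (ch x w (k + 1)) := by
      intro x w
      rw [Finset.prod_range_succ', mul_comm]
      congr 1
      · refine Finset.prod_congr rfl fun k hk => ?_
        have hk' : k < n := Finset.mem_range.mp hk
        rw [ch_cons a x w k hk'.le, show k + 1 + 1 = (k + 1) + 1 from rfl,
          ch_cons a x w (k + 1) hk']
    simp_rw [hterm, ← Finset.mul_sum, ih]
    simp_rw [Finset.mul_sum]
    rw [Finset.sum_comm]
    refine Finset.sum_congr rfl fun b _ => ?_
    rw [pow_succ' Q n, Matrix.mul_apply]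
    refine Finset.sum_congr rfl fun x _ => ?_
    rw [hQ]

end Paths


/-- Let `(y n)` be a Markov chain on `{1,…,N}` with row-stochastic
transition matrix `P` and initial distribution `δ_i` for `i ∈ I`, and assume the spectral
radius of the principal submatrix `Q` is strictly smaller than 1 (all complex eigenvalues
have modulus `< 1`).  Then the chain leaves `I` almost surely, the expected escape time is
finite, and it equals `((Id - Q)⁻¹ 𝟙)_i`. -/
theorem markov_expected_escape_time_eq_inverse
    (N : ℕ) (hN : 0 < N)
    (P : Matrix (Fin N) (Fin N) ℝ)
    (hPnonneg : ∀ a b, 0 ≤ P a b)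
    (hProw : ∀ a, ∑ b, P a b = 1)
    (I : Finset (Fin N))
    (Q : Matrix {x // x ∈ I} {x // x ∈ I} ℝ)
    (hQ : ∀ a b : {x // x ∈ I}, Q a b = P a b)
    -- the spectral radius of `Q` is strictly smaller than 1
    (hspec : ∀ z : ℂ, z ∈ spectrum ℂ (Q.map (algebraMap ℝ ℂ)) → ‖z‖ < 1)
    (Ω : Type*) [MeasurableSpace Ω] (μ : Measure Ω) [IsProbabilityMeasure μ]
    (y : ℕ → Ω → Fin N) (hy : ∀ n, Measurable (y n))
    (i : Fin N) (hi : i ∈ I)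
    -- finite-dimensional laws of the chain, started in the Dirac distribution `δ_i`
    (hlaw : ∀ (n : ℕ) (w : ℕ → Fin N),
      μ {ω | ∀ k ≤ n, y k ω = w k} =
        ENNReal.ofReal ((if w 0 = i then (1 : ℝ) else 0) *
          ∏ k ∈ Finset.range n, P (w k) (w (k + 1))))
    -- the escape time from `I`
    (T : Ω → ℕ∞)
    (hT : ∀ ω, T ω = sInf {n : ℕ∞ | ∃ m : ℕ, n = (m : ℕ∞) ∧ 1 ≤ m ∧ y m ω ∉ I}) :
    μ {ω | T ω < ⊤} = 1 ∧
    ∫⁻ ω, ((T ω : ℕ∞) : ℝ≥0∞) ∂μ ≠ ⊤ ∧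
    ∫⁻ ω, ((T ω : ℕ∞) : ℝ≥0∞) ∂μ =
      ENNReal.ofReal (((1 - Q)⁻¹ *ᵥ (fun _ => 1)) ⟨i, hi⟩) := by
  classical
  haveI : Nonempty {x // x ∈ I} := ⟨⟨i, hi⟩⟩
  set a₀ : {x // x ∈ I} := ⟨i, hi⟩ with ha₀
  have hgeom := matrix_hasSum_geom Q hspec
  have hQpos : ∀ (n : ℕ) (a b : {x // x ∈ I}), 0 ≤ (Q ^ n) a b := by
    intro n
    induction n with
    | zero =>
      intro a b
      by_cases h : a = b <;> simp [Matrix.one_apply, h]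
    | succ n ih =>
      intro a b
      rw [pow_succ, Matrix.mul_apply]
      exact Finset.sum_nonneg fun x _ => mul_nonneg (ih a x) (by rw [hQ]; exact hPnonneg _ _)
  set r : ℕ → ℝ := fun n => ∑ b, (Q ^ n) a₀ b with hrdef
  have hrnn : ∀ n, 0 ≤ r n := fun n => Finset.sum_nonneg fun b _ => hQpos n a₀ b
  have hrsum : HasSum r (((1 - Q)⁻¹ *ᵥ (fun _ => (1:ℝ))) a₀) := by
    have h := hasSum_sum (s := Finset.univ) (f := fun b n => (Q ^ n) a₀ b)
      (a := fun b => (1 - Q)⁻¹ a₀ b) (fun b _ => hgeom a₀ b)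
    have he : ((1 - Q)⁻¹ *ᵥ (fun _ => (1:ℝ))) a₀ = ∑ b, (1 - Q)⁻¹ a₀ b := by
      simp [Matrix.mulVec, dotProduct]
    rw [he]
    exact h
  -- events
  set A : ℕ → Set Ω := fun n => {ω | ∀ k, 1 ≤ k → k ≤ n → y k ω ∈ I} with hA
  have hAmeas : ∀ n, MeasurableSet (A n) := by
    intro n
    have h : A n = ⋂ (k : ℕ) (_ : 1 ≤ k) (_ : k ≤ n), (y k) ⁻¹' ↑I := by
      ext ω; simp [hA, Set.mem_iInter]
    rw [h]
    exact MeasurableSet.iInter fun k => MeasurableSet.iInter fun _ =>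
      MeasurableSet.iInter fun _ => (hy k) (by trivial)
  have hB : μ {ω | y 0 ω ≠ i} = 0 := by
    have h0 : ∀ j : Fin N, j ≠ i → μ {ω | y 0 ω = j} = 0 := by
      intro j hj
      have h := hlaw 0 (fun _ => j)
      simp only [Finset.range_zero, Finset.prod_empty, mul_one, if_neg hj,
        ENNReal.ofReal_zero] at h
      have hs : {ω | y 0 ω = j} = {ω | ∀ k ≤ 0, y k ω = (fun _ => j) k} := by
        ext ω; simp [Nat.le_zero]
      rw [hs, h]
    have hsub : {ω | y 0 ω ≠ i} ⊆ ⋃ j : Fin N, {ω | y 0 ω = j ∧ j ≠ i} :=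
      fun ω hω => Set.mem_iUnion.2 ⟨y 0 ω, rfl, hω⟩
    refine measure_mono_null hsub (measure_iUnion_null fun j => ?_)
    by_cases hj : j = i
    · subst hj; convert measure_empty (μ := μ); ext ω; simp
    · exact measure_mono_null (fun ω h => h.1) (h0 j hj)
  have hmeasA : ∀ n, μ (A n) = ENNReal.ofReal (r n) := by
    intro n
    set E : (Fin n → {x // x ∈ I}) → Set Ω :=
      fun v => {ω | ∀ k ≤ n, y k ω = ch a₀ v k} with hE
    have hdisj : Pairwise (Function.onFun Disjoint E) := by
      intro v v' hne
      refine Set.disjoint_left.2 fun ω h1 h2 => hne ?_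
      funext k
      have e1 := h1 (k.1 + 1) (Nat.succ_le_of_lt k.2)
      have e2 := h2 (k.1 + 1) (Nat.succ_le_of_lt k.2)
      rw [ch_succ a₀ v k.1 k.2] at e1
      rw [ch_succ a₀ v' k.1 k.2] at e2
      apply Subtype.ext
      have h12 := e1.symm.trans e2
      simpa using h12
    have hunion : A n ∩ {ω | y 0 ω = i} = ⋃ v, E v := by
      ext ω
      constructor
      · rintro ⟨h1, h2⟩
        refine Set.mem_iUnion.2 ⟨fun k => ⟨y (k.1 + 1) ω,
          h1 (k.1 + 1) (Nat.succ_le_succ (Nat.zero_le _)) (Nat.succ_le_of_lt k.2)⟩, ?_⟩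
        intro k hk
        cases k with
        | zero => rw [ch_zero]; exact h2
        | succ j =>
          rw [ch_succ a₀ _ j (Nat.lt_of_succ_le hk)]
      · intro hω
        obtain ⟨v, hv⟩ := Set.mem_iUnion.1 hω
        constructor
        · intro k hk1 hk2
          rw [hv k hk2]
          exact ch_mem a₀ v k
        · have h := hv 0 (Nat.zero_le n)
          show y 0 ω = i
          rw [h, ch_zero]
    have hcompl : {ω | y 0 ω = i}ᶜ = {ω | y 0 ω ≠ i} := rfl
    have hEmeas : ∀ v, MeasurableSet (E v) := by
      intro v
      have h : E v = ⋂ (k : ℕ) (_ : k ≤ n), (y k) ⁻¹' {ch a₀ v k} := by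
        ext ω; simp [hE, Set.mem_iInter]
      rw [h]
      exact MeasurableSet.iInter fun k => MeasurableSet.iInter fun _ => (hy k) (by trivial)
    have step1 : μ (A n) = μ (A n ∩ {ω | y 0 ω = i}) :=
      (measure_inter_conull (by rw [hcompl]; exact hB)).symm
    rw [step1, hunion, measure_iUnion hdisj hEmeas, tsum_fintype]
    have hμE : ∀ v, μ (E v) = ENNReal.ofReal
        (∏ k ∈ Finset.range n, P (ch a₀ v k) (ch a₀ v (k + 1))) := by
      intro v
      have h := hlaw n (ch a₀ v)
      rw [ch_zero] at h
      rw [if_pos rfl, one_mul] at h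
      exact h
    simp_rw [hμE]
    rw [← ENNReal.ofReal_sum_of_nonneg (fun v _ =>
      Finset.prod_nonneg fun k _ => hPnonneg _ _)]
    rw [hrdef]
    congr 1
    exact pathsum P Q hQ n a₀
  -- identification of T events
  have hTiff : ∀ (n : ℕ) (ω : Ω), ((n : ℕ∞) < T ω ↔ ω ∈ A n) := by
    intro n ω
    rw [hT ω]
    constructor
    · intro h k hk1 hk2
      by_contra hk
      have hmem : ((k : ℕ) : ℕ∞) ∈ {n : ℕ∞ | ∃ m : ℕ, n = (m : ℕ∞) ∧ 1 ≤ m ∧ y m ω ∉ I} :=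
        ⟨k, rfl, hk1, hk⟩
      have hle := sInf_le hmem
      have hlt : (n : ℕ∞) < (k : ℕ∞) := lt_of_lt_of_le h hle
      exact absurd (by exact_mod_cast hlt : n < k) (not_lt.2 hk2)
    · intro hω
      have hles : ((n + 1 : ℕ) : ℕ∞) ≤ sInf {n : ℕ∞ | ∃ m : ℕ,
          n = (m : ℕ∞) ∧ 1 ≤ m ∧ y m ω ∉ I} := by
        refine le_sInf ?_
        rintro b ⟨m, rfl, hm1, hm⟩
        have hnm : n < m := by
          by_contra h
          exact hm (hω m hm1 (not_lt.1 h))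
        exact_mod_cast hnm
      exact lt_of_lt_of_le (by exact_mod_cast Nat.lt_succ_self n) hles
  -- a.s. finiteness
  have hr0 : Tendsto (fun n => ENNReal.ofReal (r n)) atTop (𝓝 0) := by
    have h := hrsum.summable.tendsto_atTop_zero
    have h2 := ENNReal.tendsto_ofReal (a := 0) h
    simpa using h2
  have hTtop : μ {ω | T ω = ⊤} = 0 := by
    have hsub : ∀ n, {ω | T ω = ⊤} ⊆ A n := by
      intro n ω hω
      rw [Set.mem_setOf_eq] at hω
      refine (hTiff n ω).1 ?_
      rw [hω]
      exact_mod_cast WithTop.coe_lt_top (Nat.cast n)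
    have hle : ∀ n, μ {ω | T ω = ⊤} ≤ ENNReal.ofReal (r n) :=
      fun n => (measure_mono (hsub n)).trans_eq (hmeasA n)
    exact le_antisymm (ge_of_tendsto' hr0 hle) zero_le
  have hTtopMeas : MeasurableSet {ω | T ω = ⊤} := by
    have h : {ω | T ω = ⊤} = ⋂ n : ℕ, A n := by
      ext ω
      simp only [Set.mem_setOf_eq, Set.mem_iInter]
      constructor
      · intro h n
        exact (hTiff n ω).1 (by rw [h]; exact_mod_cast WithTop.coe_lt_top n)
      · intro h
        by_contra htop
        obtain ⟨m, hm⟩ := WithTop.ne_top_iff_exists.1 htop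
        have := (hTiff m ω).2 (h m)
        rw [← hm] at this
        exact lt_irrefl _ (by exact_mod_cast this)
    rw [h]
    exact MeasurableSet.iInter fun n => hAmeas n
  have hfin : μ {ω | T ω < ⊤} = 1 := by
    have hset : {ω | T ω < ⊤} = {ω | T ω = ⊤}ᶜ := by
      ext ω; simp [lt_top_iff_ne_top]
    rw [hset, measure_compl hTtopMeas (by rw [hTtop]; exact ENNReal.zero_ne_top), hTtop,
      measure_univ, tsub_zero]
  -- the integral
  have hTcast : ∀ ω, ((T ω : ℕ∞) : ℝ≥0∞) =
      ∑' n : ℕ, Set.indicator (A n) (fun _ => (1 : ℝ≥0∞)) ω := by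
    intro ω
    have h1 : ∀ n : ℕ, Set.indicator (A n) (fun _ => (1 : ℝ≥0∞)) ω
        = if ((n : ℕ∞) < T ω) then 1 else 0 := by
      intro n
      simp only [Set.indicator_apply]
      exact if_congr (hTiff n ω).symm rfl rfl
    rw [tsum_congr h1]
    have key : ∀ x : ℕ∞, (∑' n : ℕ, if ((n : ℕ∞) < x) then (1 : ℝ≥0∞) else 0)
        = (x : ℝ≥0∞) := by
      intro x
      induction x using ENat.recTopCoe with
      | top =>
        simp only [show ∀ n : ℕ, ((n : ℕ∞) < ⊤) = True from fun n => by
          simp [WithTop.coe_lt_top], if_true]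
        rw [ENNReal.tsum_const_eq_top_of_ne_zero one_ne_zero]
        simp
      | coe m =>
        have hoff : ∀ n : ℕ, n ∉ Finset.range m →
            (if ((n : ℕ∞) < (m : ℕ∞)) then (1 : ℝ≥0∞) else 0) = 0 := by
          intro n hn
          rw [if_neg]
          simp only [Finset.mem_range, not_lt] at hn
          exact_mod_cast not_lt.2 hn
        rw [tsum_eq_sum hoff]
        have : ∀ n ∈ Finset.range m,
            (if ((n : ℕ∞) < (m : ℕ∞)) then (1 : ℝ≥0∞) else 0) = 1 := by
          intro n hn
          rw [if_pos]
          exact_mod_cast Finset.mem_range.1 hn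
        rw [Finset.sum_congr rfl this]
        simp
    exact (key (T ω)).symm
  have hint : ∫⁻ ω, ((T ω : ℕ∞) : ℝ≥0∞) ∂μ =
      ENNReal.ofReal (((1 - Q)⁻¹ *ᵥ (fun _ => 1)) ⟨i, hi⟩) := by
    calc ∫⁻ ω, ((T ω : ℕ∞) : ℝ≥0∞) ∂μ
        = ∫⁻ ω, ∑' n : ℕ, Set.indicator (A n) (fun _ => (1 : ℝ≥0∞)) ω ∂μ :=
          lintegral_congr fun ω => hTcast ω
      _ = ∑' n : ℕ, ∫⁻ ω, Set.indicator (A n) (fun _ => (1 : ℝ≥0∞)) ω ∂μ :=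
          lintegral_tsum fun n => ((measurable_const.indicator (hAmeas n)).aemeasurable)
      _ = ∑' n : ℕ, μ (A n) := tsum_congr fun n => lintegral_indicator_one (hAmeas n)
      _ = ∑' n : ℕ, ENNReal.ofReal (r n) := tsum_congr fun n => hmeasA n
      _ = ENNReal.ofReal (∑' n : ℕ, r n) :=
          (ENNReal.ofReal_tsum_of_nonneg hrnn hrsum.summable).symm
      _ = ENNReal.ofReal (((1 - Q)⁻¹ *ᵥ (fun _ => 1)) ⟨i, hi⟩) := by
          rw [hrsum.tsum_eq]
  exact ⟨hfin, hint ▸ ENNReal.ofReal_ne_top, hint⟩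
end

section
/- Let P ∈ ℝ^{N×N} be a row-stochastic matrix that is irreducible in the sense that there is no nonempty proper subset J ⊊ {1,…,N} which is invariant with probability one, i.e. no nonempty proper J with P_{ij} = 0 for all i ∈ J and j ∉ J. Let I ⊆ {1,…,N} be a nonempty proper subset and let Q = (P_{ij})_{i,j∈I} be the corresponding principal submatrix. Then the spectral radius of Q is strictly smaller than 1. -/
open Matrix Finset

/-- Let `P` be a row-stochastic `N × N` matrix that is irreducible in the
sense that no nonempty proper subset `J ⊊ {1,…,N}` is invariant with probability one
(i.e. there is no nonempty proper `J` with `P i j = 0` for all `i ∈ J`, `j ∉ J`).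
Let `I` be a nonempty proper subset and `Q` the corresponding principal submatrix.
Then the spectral radius of `Q` (the maximum modulus of its complex eigenvalues) is
strictly smaller than 1. -/
theorem spectral_radius_principal_submatrix_lt_one
    (N : ℕ) (hN : 0 < N)
    (P : Matrix (Fin N) (Fin N) ℝ)
    (hPnonneg : ∀ a b, 0 ≤ P a b)
    (hProw : ∀ a, ∑ b, P a b = 1)
    -- irreducibility: no nonempty proper invariant subset
    (hirr : ∀ J : Finset (Fin N), J.Nonempty → J ≠ Finset.univ →
      ∃ a ∈ J, ∃ b, b ∉ J ∧ P a b ≠ 0)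
    (I : Finset (Fin N)) (hInonempty : I.Nonempty) (hIproper : I ≠ Finset.univ)
    (Q : Matrix {x // x ∈ I} {x // x ∈ I} ℝ)
    (hQ : ∀ a b : {x // x ∈ I}, Q a b = P a b) :
    ∀ z : ℂ, z ∈ spectrum ℂ (Q.map (algebraMap ℝ ℂ)) → ‖z‖ < 1 := by
  classical
  intro z hz
  by_contra hge
  push_neg at hge
  have hne : Nonempty {x // x ∈ I} := ⟨⟨hInonempty.choose, hInonempty.choose_spec⟩⟩
  set A := Q.map (algebraMap ℝ ℂ) with hA
  rw [spectrum.mem_iff] at hz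
  have hdet : (algebraMap ℂ (Matrix {x // x ∈ I} {x // x ∈ I} ℂ) z - A).det = 0 := by
    by_contra h
    exact hz ((Matrix.isUnit_iff_isUnit_det _).mpr (isUnit_iff_ne_zero.mpr h))
  obtain ⟨v, hv0, hv⟩ := (Matrix.exists_mulVec_eq_zero_iff).mpr hdet
  have heig : ∀ i, ∑ j, (Q i j : ℂ) * v j = z * v i := by
    intro i
    have h1 := congrFun hv i
    simp only [Matrix.sub_mulVec, Algebra.algebraMap_eq_smul_one, Matrix.smul_mulVec,
      Matrix.one_mulVec, Pi.sub_apply, Pi.smul_apply, smul_eq_mul, Pi.zero_apply,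
      sub_eq_zero] at h1
    rw [h1]
    simp [hA, Matrix.mulVec, dotProduct, Matrix.map_apply]
  set w : {x // x ∈ I} → ℝ := fun i => ‖v i‖ with hw
  have hwnn : ∀ i, 0 ≤ w i := fun i => norm_nonneg _
  have key : ∀ i, w i ≤ ∑ j, Q i j * w j := by
    intro i
    have h1 : ‖z‖ * w i = ‖∑ j, (Q i j : ℂ) * v j‖ := by
      rw [heig i]; simp [hw, _root_.map_mul]
    have h2 : ‖∑ j, (Q i j : ℂ) * v j‖ ≤ ∑ j, Q i j * w j := by
      refine le_trans (norm_sum_le _ _) ?_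
      apply le_of_eq
      refine Finset.sum_congr rfl fun j _ => ?_
      rw [norm_mul, Complex.norm_real, Real.norm_eq_abs, abs_of_nonneg]
      rw [hQ]; exact hPnonneg _ _
    calc w i ≤ ‖z‖ * w i := le_mul_of_one_le_left (hwnn i) hge
    _ ≤ ∑ j, Q i j * w j := h1 ▸ h2
  set m : ℝ := Finset.univ.sup' Finset.univ_nonempty w with hm
  have hle_m : ∀ i, w i ≤ m := fun i => Finset.le_sup' w (Finset.mem_univ i)
  have hm_pos : 0 < m := by
    obtain ⟨i, hi⟩ : ∃ i, v i ≠ 0 := by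
      by_contra h
      push_neg at h
      exact hv0 (funext h)
    have : 0 < w i := by simpa [hw] using norm_pos_iff.mpr hi
    exact lt_of_lt_of_le this (hle_m i)
  have hQnn : ∀ a b : {x // x ∈ I}, 0 ≤ Q a b := fun a b => (hQ a b) ▸ hPnonneg _ _
  -- the set where the max is attained
  set S : Finset (Fin N) :=
    Finset.univ.filter (fun b => ∃ h : b ∈ I, w ⟨b, h⟩ = m) with hS
  have hSsub : S ⊆ I := by
    intro b hb
    rw [hS, Finset.mem_filter] at hb
    exact hb.2.choose
  have hSne : S.Nonempty := by
    obtain ⟨i, _, hi⟩ := Finset.exists_mem_eq_sup' Finset.univ_nonempty w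
    exact ⟨(i : Fin N), by rw [hS, Finset.mem_filter]; exact ⟨Finset.mem_univ _, i.2, hi.symm⟩⟩
  have hSproper : S ≠ Finset.univ := by
    intro h
    exact hIproper (Finset.univ_subset_iff.mp (h ▸ hSsub))
  obtain ⟨a, haS, b, hbS, hPab⟩ := hirr S hSne hSproper
  have haI : a ∈ I := hSsub haS
  have hwa : w ⟨a, haI⟩ = m := by
    rw [hS, Finset.mem_filter] at haS
    exact haS.2.choose_spec
  set i₀ : {x // x ∈ I} := ⟨a, haI⟩ with hi₀
  -- equality chain
  have hsumI : ∑ j : {x // x ∈ I}, P a (j : Fin N) = ∑ j ∈ I, P a j := by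
    rw [Finset.sum_coe_sort]
  have hrow_le : ∑ j : {x // x ∈ I}, Q i₀ j ≤ 1 := by
    calc ∑ j : {x // x ∈ I}, Q i₀ j = ∑ j ∈ I, P a j := by
          rw [← hsumI]; exact Finset.sum_congr rfl fun j _ => hQ i₀ j
    _ ≤ ∑ j, P a j := Finset.sum_le_sum_of_subset_of_nonneg (Finset.subset_univ I)
          (fun j _ _ => hPnonneg a j)
    _ = 1 := hProw a
  have h1 : m ≤ ∑ j, Q i₀ j * w j := hwa ▸ key i₀
  have hterm_le : ∀ j ∈ Finset.univ, Q i₀ j * w j ≤ Q i₀ j * m :=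
    fun j _ => mul_le_mul_of_nonneg_left (hle_m j) (hQnn i₀ j)
  have h2 : ∑ j, Q i₀ j * w j ≤ (∑ j, Q i₀ j) * m := by
    rw [Finset.sum_mul]
    exact Finset.sum_le_sum hterm_le
  have h3 : (∑ j, Q i₀ j) * m ≤ m := by
    calc (∑ j, Q i₀ j) * m ≤ 1 * m :=
          mul_le_mul_of_nonneg_right hrow_le hm_pos.le
    _ = m := one_mul m
  have heq2 : ∑ j, Q i₀ j * w j = (∑ j, Q i₀ j) * m := le_antisymm h2 (by linarith)
  have heq3 : (∑ j, Q i₀ j) * m = m := le_antisymm h3 (by linarith)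
  have hrow_eq : ∑ j : {x // x ∈ I}, Q i₀ j = 1 := by
    have : (∑ j, Q i₀ j) * m = 1 * m := by rw [one_mul]; exact heq3
    exact mul_right_cancel₀ hm_pos.ne' this
  have hterms : ∀ j ∈ Finset.univ, Q i₀ j * w j = Q i₀ j * m := by
    rw [← Finset.sum_eq_sum_iff_of_le hterm_le]
    rw [heq2, Finset.sum_mul]
  -- Now show P a b = 0, contradiction
  apply hPab
  by_cases hbI : b ∈ I
  · -- b ∈ I but w ⟨b⟩ ≠ m, so Q i₀ ⟨b⟩ = 0
    have hwb : w ⟨b, hbI⟩ ≠ m := by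
      intro h
      exact hbS (by rw [hS, Finset.mem_filter]; exact ⟨Finset.mem_univ _, hbI, h⟩)
    have := hterms ⟨b, hbI⟩ (Finset.mem_univ _)
    have hQ0 : Q i₀ ⟨b, hbI⟩ = 0 := by
      by_contra hne0
      exact hwb (mul_left_cancel₀ hne0 this)
    rw [← hQ i₀ ⟨b, hbI⟩]; exact hQ0
  · -- b ∉ I: row of P at a is supported in I
    have hsum1 : ∑ j ∈ I, P a j = 1 := by
      rw [← hsumI]
      calc ∑ j : {x // x ∈ I}, P a (j : Fin N)
          = ∑ j : {x // x ∈ I}, Q i₀ j := Finset.sum_congr rfl fun j _ => (hQ i₀ j).symm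
      _ = 1 := hrow_eq
    have hcompl : ∑ j ∈ Iᶜ, P a j = 0 := by
      have := Finset.sum_compl_add_sum I (P a)
      rw [hsum1, hProw a] at this
      linarith
    have := (Finset.sum_eq_zero_iff_of_nonneg (fun j _ => hPnonneg a j)).mp hcompl
    exact this b (Finset.mem_compl.mpr hbI)
end
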